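/- For every positive integer n, the cycle C_{2n} on 2n vertices, viewed as an n × n bipartite graph, contains no bi-hole of size ⌈n/2⌉; hence the largest k such that every n × n bipartite graph with one-sided maximum degree at most 2 has a bi-hole of size k is exactly ⌈n/2⌉ - 1. -/
import Mathlib


def BiHole (n k : ℕ) (G : Fin n → Fin n → Prop) : Prop :=
  ∃ X Y : Finset (Fin n), X.card = k ∧ Y.card = k ∧
    ∀ a ∈ X, ∀ b ∈ Y, ¬ G a b

noncomputable def degA {n : ℕ} (G : Fin n → Fin n → Prop) (a : Fin n) : ℕ :=
  Nat.card {b : Fin n // G a b}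

/-- The cycle `C_{2n}` viewed as an `n × n` bipartite graph: `a_i` is joined to
`b_i` and `b_{i+1 mod n}`. -/
def cycleGraph (n : ℕ) : Fin n → Fin n → Prop :=
  fun i j => (j : ℕ) = (i : ℕ) ∨ (j : ℕ) = ((i : ℕ) + 1) % n

open Finset

/-- Double counting: sum of degrees equals sum of edge sizes. -/
lemma dcount {α β : Type*} [DecidableEq α] [DecidableEq β]
    (T : Finset β) (B : Finset α) (N : α → Finset β) (h : ∀ a ∈ B, N a ⊆ T) :
    ∑ z ∈ T, (B.filter (fun a => z ∈ N a)).card = ∑ a ∈ B, (N a).card := by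
  have h1 : ∀ z, (B.filter (fun a => z ∈ N a)).card = ∑ a ∈ B, if z ∈ N a then 1 else 0 :=
    fun z => Finset.card_filter _ _
  simp_rw [h1]
  rw [Finset.sum_comm]
  refine Finset.sum_congr rfl fun a ha => ?_
  rw [← Finset.card_filter]
  congr 1
  rw [Finset.filter_mem_eq_inter, Finset.inter_eq_right.mpr (h a ha)]

/-- Key lemma: a multigraph with `n` vertices and `n` edges (each of size ≤ 2,
all inside `V`) has, for every `s ≤ n`, a set of `s` vertices containing at
least `s - 1` edges. -/
lemma key {α β : Type*} [DecidableEq α] [DecidableEq β] :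
    ∀ n (V : Finset β) (A : Finset α) (N : α → Finset β),
      V.card = n → A.card = n → (∀ a ∈ A, (N a).card ≤ 2) → (∀ a ∈ A, N a ⊆ V) →
      ∀ s ≤ n, ∃ S ⊆ V, S.card = s ∧ s - 1 ≤ (A.filter (fun a => N a ⊆ S)).card := by
  intro n
  induction n with
  | zero =>
    intro V A N hV hA hN2 hNV s hs
    interval_cases s
    exact ⟨∅, empty_subset _, card_empty, by omega⟩
  | succ n ih =>
    intro V A N hV hA hN2 hNV s hs
    rcases eq_or_lt_of_le hs with hsn | hsn
    · -- s = n+1 : take S = V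
      refine ⟨V, Subset.rfl, by omega, ?_⟩
      have : A.filter (fun a => N a ⊆ V) = A := Finset.filter_eq_self.mpr hNV
      rw [this]; omega
    · have hs' : s ≤ n := by omega
      by_cases h2 : ∀ v ∈ V, 2 ≤ (A.filter (fun a => v ∈ N a)).card
      · -- Every vertex has degree ≥ 2: graph is 2-regular with all edges of size 2.
        have hdc : ∑ v ∈ V, (A.filter (fun a => v ∈ N a)).card = ∑ a ∈ A, (N a).card :=
          dcount V A N hNV
        have hup : ∑ a ∈ A, (N a).card ≤ ∑ a ∈ A, 2 :=
          Finset.sum_le_sum hN2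
        have hlow : ∑ v ∈ V, 2 ≤ ∑ v ∈ V, (A.filter (fun a => v ∈ N a)).card :=
          Finset.sum_le_sum h2
        have hVs : ∑ v ∈ V, 2 = 2 * (n+1) := by rw [Finset.sum_const, hV, smul_eq_mul]; ring
        have hAs : ∑ a ∈ A, 2 = 2 * (n+1) := by rw [Finset.sum_const, hA, smul_eq_mul]; ring
        have heq1 : ∑ v ∈ V, 2 = ∑ v ∈ V, (A.filter (fun a => v ∈ N a)).card := by omega
        have heq2 : ∑ a ∈ A, (N a).card = ∑ a ∈ A, 2 := by omega
        have hdeg2 : ∀ v ∈ V, (A.filter (fun a => v ∈ N a)).card = 2 := by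
          intro v hv
          exact ((Finset.sum_eq_sum_iff_of_le h2).mp heq1 v hv).symm
        have hcard2 : ∀ a ∈ A, (N a).card = 2 :=
          (Finset.sum_eq_sum_iff_of_le hN2).mp heq2
        -- pick a vertex v and its two edges a₁ a₂
        have hVne : V.Nonempty := by rw [← Finset.card_pos, hV]; omega
        obtain ⟨v, hvV⟩ := hVne
        obtain ⟨a₁, a₂, ha12, hF⟩ := Finset.card_eq_two.mp (hdeg2 v hvV)
        have ha₁F : a₁ ∈ A.filter (fun a => v ∈ N a) := by rw [hF]; simp
        have ha₂F : a₂ ∈ A.filter (fun a => v ∈ N a) := by rw [hF]; simp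
        have ha₁A : a₁ ∈ A := (Finset.mem_filter.mp ha₁F).1
        have ha₂A : a₂ ∈ A := (Finset.mem_filter.mp ha₂F).1
        have hvN₁ : v ∈ N a₁ := (Finset.mem_filter.mp ha₁F).2
        have hvN₂ : v ∈ N a₂ := (Finset.mem_filter.mp ha₂F).2
        -- other endpoints
        have hu : ∃ u, u ≠ v ∧ N a₁ = {v, u} := by
          obtain ⟨x, y, hxy, hN⟩ := Finset.card_eq_two.mp (hcard2 a₁ ha₁A)
          rw [hN] at hvN₁
          rcases Finset.mem_insert.mp hvN₁ with h | h
          · exact ⟨y, by rw [← h] at hxy; exact fun hyv => hxy hyv.symm, by rw [hN, h]⟩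
          · have := Finset.mem_singleton.mp h
            exact ⟨x, by rw [← this] at hxy; exact fun hxv => hxy hxv, by
              rw [hN, this, Finset.pair_comm]⟩
        obtain ⟨u, huv, hNa₁⟩ := hu
        have hw : ∃ w, w ≠ v ∧ N a₂ = {v, w} := by
          obtain ⟨x, y, hxy, hN⟩ := Finset.card_eq_two.mp (hcard2 a₂ ha₂A)
          rw [hN] at hvN₂
          rcases Finset.mem_insert.mp hvN₂ with h | h
          · exact ⟨y, by rw [← h] at hxy; exact fun hyv => hxy hyv.symm, by rw [hN, h]⟩
          · have := Finset.mem_singleton.mp h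
            exact ⟨x, by rw [← this] at hxy; exact fun hxv => hxy hxv, by
              rw [hN, this, Finset.pair_comm]⟩
        obtain ⟨w, hwv, hNa₂⟩ := hw
        have huV : u ∈ V := hNV a₁ ha₁A (by rw [hNa₁]; simp)
        have hwV : w ∈ V := hNV a₂ ha₂A (by rw [hNa₂]; simp)
        -- smoothed instance
        set N' : α → Finset β := Function.update N a₂ ({u, w} : Finset β) with hN'def
        have hN'a₂ : N' a₂ = {u, w} := Function.update_self _ _ _
        have hN'ne : ∀ a, a ≠ a₂ → N' a = N a := fun a ha => Function.update_of_ne ha _ _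
        have hVe : (V.erase v).card = n := by rw [Finset.card_erase_of_mem hvV, hV]; omega
        have hAe : (A.erase a₁).card = n := by rw [Finset.card_erase_of_mem ha₁A, hA]; omega
        have hnotF : ∀ a ∈ A, a ≠ a₁ → a ≠ a₂ → v ∉ N a := by
          intro a haA h1 h2c hvNa
          have : a ∈ A.filter (fun a => v ∈ N a) := Finset.mem_filter.mpr ⟨haA, hvNa⟩
          rw [hF] at this
          rcases Finset.mem_insert.mp this with h | h
          · exact h1 h
          · exact h2c (Finset.mem_singleton.mp h)
        have hN'2 : ∀ a ∈ A.erase a₁, (N' a).card ≤ 2 := by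
          intro a ha
          by_cases hc : a = a₂
          · rw [hc, hN'a₂]; exact (Finset.card_insert_le _ _).trans (by simp)
          · rw [hN'ne a hc]; exact hN2 a (Finset.mem_of_mem_erase ha)
        have hN'V : ∀ a ∈ A.erase a₁, N' a ⊆ V.erase v := by
          intro a ha
          by_cases hc : a = a₂
          · rw [hc, hN'a₂]
            intro x hx
            rcases Finset.mem_insert.mp hx with h | h
            · subst h; exact Finset.mem_erase.mpr ⟨huv, huV⟩
            · rw [Finset.mem_singleton.mp h]; exact Finset.mem_erase.mpr ⟨hwv, hwV⟩
          · rw [hN'ne a hc]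
            have haA := Finset.mem_of_mem_erase ha
            have hne1 := (Finset.mem_erase.mp ha).1
            intro x hx
            exact Finset.mem_erase.mpr ⟨fun hxv => hnotF a haA hne1 hc (hxv ▸ hx), hNV a haA hx⟩
        obtain ⟨S, hSV', hScard, hScnt⟩ := ih (V.erase v) (A.erase a₁) N' hVe hAe hN'2 hN'V s hs'
        have hSV : S ⊆ V := hSV'.trans (Finset.erase_subset _ _)
        by_cases hcnt : a₂ ∈ (A.erase a₁).filter (fun a => N' a ⊆ S)
        · -- a₂ was counted via the rerouted edge {u,w}
          have huS : u ∈ S := by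
            have := (Finset.mem_filter.mp hcnt).2
            rw [hN'a₂] at this
            exact this (by simp)
          have hwS : w ∈ S := by
            have := (Finset.mem_filter.mp hcnt).2
            rw [hN'a₂] at this
            exact this (by simp)
          have hvS : v ∉ S := fun h => (Finset.mem_erase.mp (hSV' h)).1 rfl
          set T : Finset β := insert v S with hTdef
          have hTV : T ⊆ V := Finset.insert_subset hvV hSV
          have hTcard : T.card = s + 1 := by
            rw [Finset.card_insert_of_notMem hvS, hScard]
          set B : Finset α := A.filter (fun a => N a ⊆ T) with hBdef
          have hBedge : ∀ a ∈ B, N a ⊆ T := fun a ha => (Finset.mem_filter.mp ha).2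
          have hBsub : B ⊆ A := Finset.filter_subset _ _
          -- B has at least s elements
          have hBcard : s ≤ B.card := by
            have hsubB : ((A.erase a₁).filter (fun a => N' a ⊆ S)).erase a₂ ∪ {a₁, a₂} ⊆ B := by
              intro a ha
              rcases Finset.mem_union.mp ha with h | h
              · have ha2 := (Finset.mem_erase.mp h).1
                have hmem := Finset.mem_of_mem_erase h
                have haA := Finset.mem_of_mem_erase (Finset.mem_filter.mp hmem).1
                have hsub : N a ⊆ S := by
                  rw [← hN'ne a ha2]; exact (Finset.mem_filter.mp hmem).2
                exact Finset.mem_filter.mpr ⟨haA, hsub.trans (Finset.subset_insert _ _)⟩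
              · rcases Finset.mem_insert.mp h with h | h
                · subst h
                  refine Finset.mem_filter.mpr ⟨ha₁A, ?_⟩
                  rw [hNa₁]
                  intro x hx
                  rcases Finset.mem_insert.mp hx with h | h
                  · subst h; exact Finset.mem_insert_self _ _
                  · rw [Finset.mem_singleton.mp h]
                    exact Finset.mem_insert_of_mem huS
                · rw [Finset.mem_singleton.mp h]
                  refine Finset.mem_filter.mpr ⟨ha₂A, ?_⟩
                  rw [hNa₂]
                  intro x hx
                  rcases Finset.mem_insert.mp hx with h | h
                  · subst h; exact Finset.mem_insert_self _ _
                  · rw [Finset.mem_singleton.mp h]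
                    exact Finset.mem_insert_of_mem hwS
            have hdisj : Disjoint (((A.erase a₁).filter (fun a => N' a ⊆ S)).erase a₂)
                ({a₁, a₂} : Finset α) := by
              rw [Finset.disjoint_right]
              intro a ha haC
              rcases Finset.mem_insert.mp ha with h | h
              · subst h
                exact (Finset.mem_erase.mp (Finset.mem_filter.mp
                  (Finset.mem_of_mem_erase haC)).1).1 rfl
              · rw [Finset.mem_singleton.mp h] at haC
                exact (Finset.mem_erase.mp haC).1 rfl
            have h1 : (((A.erase a₁).filter (fun a => N' a ⊆ S)).erase a₂ ∪ {a₁, a₂}).card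
                = ((A.erase a₁).filter (fun a => N' a ⊆ S)).card - 1 + 2 := by
              rw [Finset.card_union_of_disjoint hdisj, Finset.card_erase_of_mem hcnt]
              congr 1
              rw [Finset.card_insert_of_notMem (by simp [ha12]), Finset.card_singleton]
            have h2 := Finset.card_le_card hsubB
            have hpos : 1 ≤ ((A.erase a₁).filter (fun a => N' a ⊆ S)).card :=
              Finset.card_pos.mpr ⟨a₂, hcnt⟩
            omega
          by_cases hz : ∃ z ∈ T, (B.filter (fun a => z ∈ N a)).card ≤ 1
          · obtain ⟨z, hzT, hz1⟩ := hz
            refine ⟨T.erase z, (Finset.erase_subset _ _).trans hTV, ?_, ?_⟩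
            · rw [Finset.card_erase_of_mem hzT, hTcard]; omega
            · have hsub : B.filter (fun a => z ∉ N a) ⊆ A.filter (fun a => N a ⊆ T.erase z) := by
                intro a ha
                have h1 := Finset.mem_filter.mp ha
                refine Finset.mem_filter.mpr ⟨hBsub h1.1, ?_⟩
                intro x hx
                exact Finset.mem_erase.mpr ⟨fun hxz => h1.2 (hxz ▸ hx), hBedge a h1.1 hx⟩
              have hsplit := Finset.card_filter_add_card_filter_not
                (s := B) (fun a => z ∈ N a)
              have := Finset.card_le_card hsub
              omega
          · push_neg at hz
            -- all degrees in T are ≥ 2, so B.card ≥ s+1; remove v itself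
            have hdcT : ∑ z ∈ T, (B.filter (fun a => z ∈ N a)).card = ∑ a ∈ B, (N a).card :=
              dcount T B N hBedge
            have hsum2 : ∑ a ∈ B, (N a).card = 2 * B.card := by
              rw [Finset.sum_congr rfl (fun a ha => hcard2 a (hBsub ha)),
                Finset.sum_const, smul_eq_mul]
              ring
            have hlowT : ∑ z ∈ T, 2 ≤ ∑ z ∈ T, (B.filter (fun a => z ∈ N a)).card :=
              Finset.sum_le_sum (fun z hzT => hz z hzT)
            have hTs : ∑ z ∈ T, 2 = 2 * (s + 1) := by rw [Finset.sum_const, hTcard, smul_eq_mul]; ring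
            have hBbig : s + 1 ≤ B.card := by omega
            have hvT : v ∈ T := Finset.mem_insert_self _ _
            have hdegv : (B.filter (fun a => v ∈ N a)).card ≤ 2 := by
              have hsubf : B.filter (fun a => v ∈ N a) ⊆ A.filter (fun a => v ∈ N a) :=
                Finset.filter_subset_filter _ hBsub
              have hle := Finset.card_le_card hsubf
              rw [hdeg2 v hvV] at hle
              exact hle
            refine ⟨T.erase v, (Finset.erase_subset _ _).trans hTV, ?_, ?_⟩
            · rw [Finset.card_erase_of_mem hvT, hTcard]; omega
            · have hsub : B.filter (fun a => v ∉ N a) ⊆ A.filter (fun a => N a ⊆ T.erase v) := by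
                intro a ha
                have h1 := Finset.mem_filter.mp ha
                refine Finset.mem_filter.mpr ⟨hBsub h1.1, ?_⟩
                intro x hx
                exact Finset.mem_erase.mpr ⟨fun hxz => h1.2 (hxz ▸ hx), hBedge a h1.1 hx⟩
              have hsplit := Finset.card_filter_add_card_filter_not
                (s := B) (fun a => v ∈ N a)
              have := Finset.card_le_card hsub
              omega
        · -- a₂ not counted: S itself works
          refine ⟨S, hSV, hScard, ?_⟩
          have hsub : (A.erase a₁).filter (fun a => N' a ⊆ S) ⊆
              A.filter (fun a => N a ⊆ S) := by
            intro a ha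
            have h1 := Finset.mem_filter.mp ha
            have ha2 : a ≠ a₂ := fun h => hcnt (h ▸ ha)
            refine Finset.mem_filter.mpr ⟨Finset.mem_of_mem_erase h1.1, ?_⟩
            rw [← hN'ne a ha2]; exact h1.2
          exact le_trans hScnt (Finset.card_le_card hsub)
      · -- some vertex has degree ≤ 1
        push_neg at h2
        obtain ⟨v, hvV, hdeg⟩ := h2
        have hdeg1 : (A.filter (fun a => v ∈ N a)).card ≤ 1 := by omega
        have hAne : A.Nonempty := by rw [← Finset.card_pos, hA]; omega
        have ha₀ : ∃ a₀ ∈ A, ∀ a ∈ A, a ≠ a₀ → v ∉ N a := by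
          by_cases hne : (A.filter (fun a => v ∈ N a)).Nonempty
          · obtain ⟨a₀, ha₀⟩ := hne
            refine ⟨a₀, (Finset.mem_filter.mp ha₀).1, fun a haA hne hvNa => ?_⟩
            have h1 : a ∈ A.filter (fun a => v ∈ N a) := Finset.mem_filter.mpr ⟨haA, hvNa⟩
            have := Finset.card_le_one.mp hdeg1 a h1 a₀ ha₀
            exact hne this
          · obtain ⟨a₀, ha₀⟩ := hAne
            refine ⟨a₀, ha₀, fun a haA _ hvNa => ?_⟩
            exact hne ⟨a, Finset.mem_filter.mpr ⟨haA, hvNa⟩⟩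
        obtain ⟨a₀, ha₀A, ha₀⟩ := ha₀
        have hVe : (V.erase v).card = n := by rw [Finset.card_erase_of_mem hvV, hV]; omega
        have hAe : (A.erase a₀).card = n := by rw [Finset.card_erase_of_mem ha₀A, hA]; omega
        have hN2' : ∀ a ∈ A.erase a₀, (N a).card ≤ 2 :=
          fun a ha => hN2 a (Finset.mem_of_mem_erase ha)
        have hNV' : ∀ a ∈ A.erase a₀, N a ⊆ V.erase v := by
          intro a ha x hx
          have haA := Finset.mem_of_mem_erase ha
          have hne := (Finset.mem_erase.mp ha).1
          exact Finset.mem_erase.mpr ⟨fun hxv => ha₀ a haA hne (hxv ▸ hx), hNV a haA hx⟩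
        obtain ⟨S, hSV', hScard, hScnt⟩ := ih (V.erase v) (A.erase a₀) N hVe hAe hN2' hNV' s hs'
        refine ⟨S, hSV'.trans (Finset.erase_subset _ _), hScard, ?_⟩
        refine le_trans hScnt (Finset.card_le_card ?_)
        exact Finset.filter_subset_filter _ (Finset.erase_subset _ _)

def cSucc (n : ℕ) (hn : 1 ≤ n) (i : Fin n) : Fin n :=
  ⟨((i : ℕ) + 1) % n, Nat.mod_lt _ hn⟩

lemma cSucc_iter (n : ℕ) (hn : 1 ≤ n) (i : Fin n) (m : ℕ) :
    ((cSucc n hn)^[m] i : ℕ) = ((i : ℕ) + m) % n := by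
  induction m with
  | zero => simp [Nat.mod_eq_of_lt i.isLt]
  | succ m ihm =>
    rw [Function.iterate_succ_apply']
    show (((cSucc n hn)^[m] i : ℕ) + 1) % n = _
    rw [ihm, Nat.mod_add_mod, Nat.add_assoc]

lemma closed_univ (n : ℕ) (hn : 1 ≤ n) (X : Finset (Fin n))
    (hne : X.Nonempty) (hcl : ∀ i ∈ X, cSucc n hn i ∈ X) : X = Finset.univ := by
  obtain ⟨i₀, hi₀⟩ := hne
  have hiter : ∀ m, (cSucc n hn)^[m] i₀ ∈ X := by
    intro m
    induction m with
    | zero => exact hi₀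
    | succ m ihm => rw [Function.iterate_succ_apply']; exact hcl _ ihm
  apply Finset.eq_univ_of_forall
  intro j
  have h := hiter (n - (i₀ : ℕ) + (j : ℕ))
  have hval : ((cSucc n hn)^[n - (i₀ : ℕ) + (j : ℕ)] i₀ : ℕ) = (j : ℕ) := by
    rw [cSucc_iter]
    have h1 : (i₀ : ℕ) ≤ n := le_of_lt i₀.isLt
    have h2 : (i₀ : ℕ) + (n - (i₀ : ℕ) + (j : ℕ)) = n + (j : ℕ) := by omega
    rw [h2, Nat.add_mod_left, Nat.mod_eq_of_lt j.isLt]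
  have : (cSucc n hn)^[n - (i₀ : ℕ) + (j : ℕ)] i₀ = j := Fin.ext hval
  rwa [this] at h

lemma no_bihole_cycle (n : ℕ) (hn : 1 ≤ n) :
    ¬ ∃ X Y : Finset (Fin n), X.card = (n+1)/2 ∧ Y.card = (n+1)/2 ∧
      ∀ a ∈ X, ∀ b ∈ Y, ¬ cycleGraph n a b := by
  rintro ⟨X, Y, hX, hY, hXY⟩
  set k₀ := (n+1)/2 with hk₀
  set I : Finset (Fin n) := X.image (cSucc n hn) with hI
  have hdisj : Disjoint Y (X ∪ I) := by
    rw [Finset.disjoint_right]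
    intro b hb hbY
    rcases Finset.mem_union.mp hb with h | h
    · exact hXY b h b hbY (Or.inl rfl)
    · obtain ⟨a, haX, hab⟩ := Finset.mem_image.mp h
      exact hXY a haX b hbY (Or.inr (by rw [← hab]; rfl))
  have hcard : Y.card + (X ∪ I).card ≤ n := by
    have heq := Finset.card_union_of_disjoint hdisj.symm
    have hle := Finset.card_le_univ ((X ∪ I) ∪ Y)
    rw [heq, Fintype.card_fin] at hle
    omega
  have hXsub : X ⊆ X ∪ I := Finset.subset_union_left
  have hXle : k₀ ≤ (X ∪ I).card := hX ▸ Finset.card_le_card hXsub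
  -- so 2k₀ ≤ n, forcing n even, (X∪I).card = k₀
  have h2k : k₀ + k₀ ≤ n := by omega
  have hunion : (X ∪ I).card = k₀ := by omega
  have hXeq : X = X ∪ I := Finset.eq_of_subset_of_card_le hXsub (by omega)
  have hcl : ∀ i ∈ X, cSucc n hn i ∈ X := by
    intro i hi
    rw [hXeq]
    exact Finset.mem_union_right _ (Finset.mem_image_of_mem _ hi)
  have hne : X.Nonempty := by
    rw [← Finset.card_pos, hX]; omega
  have huniv := closed_univ n hn X hne hcl
  have : X.card = n := by rw [huniv, Finset.card_univ, Fintype.card_fin]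
  omega

lemma degA_eq {n : ℕ} (G : Fin n → Fin n → Prop) (a : Fin n) [DecidablePred (G a)] :
    degA G a = (Finset.univ.filter (fun b => G a b)).card := by
  rw [degA, Nat.card_eq_fintype_card, Fintype.card_subtype]

lemma degA_cycle (n : ℕ) (hn : 1 ≤ n) (a : Fin n) : degA (cycleGraph n) a ≤ 2 := by
  classical
  rw [degA_eq]
  have hsub : Finset.univ.filter (fun b => cycleGraph n a b) ⊆
      ({a, ⟨((a : ℕ) + 1) % n, Nat.mod_lt _ hn⟩} : Finset (Fin n)) := by
    intro b hb
    rcases (Finset.mem_filter.mp hb).2 with h | h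
    · exact Finset.mem_insert.mpr (Or.inl (Fin.ext h))
    · exact Finset.mem_insert.mpr (Or.inr (Finset.mem_singleton.mpr (Fin.ext h)))
  have h1 := Finset.card_le_card hsub
  have h2 : ({a, (⟨((a : ℕ) + 1) % n, Nat.mod_lt _ hn⟩ : Fin n)} : Finset (Fin n)).card ≤ 2 :=
    (Finset.card_insert_le _ _).trans (by simp)
  omega

lemma bihole_mono {n k k' : ℕ} (G : Fin n → Fin n → Prop) (h : k ≤ k')
    (hb : BiHole n k' G) : BiHole n k G := by
  obtain ⟨X, Y, hX, hY, hXY⟩ := hb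
  obtain ⟨X', hX's, hX'⟩ := Finset.exists_subset_card_eq (hX ▸ h)
  obtain ⟨Y', hY's, hY'⟩ := Finset.exists_subset_card_eq (hY ▸ h)
  exact ⟨X', Y', hX', hY', fun a ha b hb => hXY a (hX's ha) b (hY's hb)⟩

lemma bihole_of_deg2 (n : ℕ) (hn : 1 ≤ n) (G : Fin n → Fin n → Prop)
    (hdeg : ∀ a, degA G a ≤ 2) : BiHole n ((n + 1) / 2 - 1) G := by
  classical
  set k := (n + 1) / 2 - 1 with hk
  set N : Fin n → Finset (Fin n) := fun a => Finset.univ.filter (fun b => G a b) with hNdef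
  have hN2 : ∀ a ∈ (Finset.univ : Finset (Fin n)), (N a).card ≤ 2 := by
    intro a _
    rw [hNdef]
    rw [← degA_eq]
    exact hdeg a
  obtain ⟨S, hSV, hScard, hcnt⟩ := key n (Finset.univ : Finset (Fin n))
    (Finset.univ : Finset (Fin n)) N (by simp) (by simp) hN2
    (fun a _ => Finset.subset_univ _) (n - k) (by omega)
  have hk_le : k ≤ n - k - 1 := by omega
  obtain ⟨X, hXsub, hXcard⟩ := Finset.exists_subset_card_eq (le_trans hk_le hcnt)
  refine ⟨X, Finset.univ \ S, hXcard, ?_, ?_⟩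
  · rw [Finset.card_sdiff_of_subset (Finset.subset_univ _), Finset.card_univ, Fintype.card_fin, hScard]
    omega
  · intro a ha b hb hG
    have haf := hXsub ha
    have hNaS : N a ⊆ S := (Finset.mem_filter.mp haf).2
    have hbNa : b ∈ N a := Finset.mem_filter.mpr ⟨Finset.mem_univ _, hG⟩
    exact (Finset.mem_sdiff.mp hb).2 (hNaS hbNa)

/-- `C_{2n}` has no bi-hole of size `⌈n/2⌉`; hence `⌈n/2⌉ - 1` is
the largest `k` such that every `n × n` bipartite graph with one-sided maximum
degree at most `2` has a bi-hole of size `k`. -/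
theorem cycle_no_bihole_and_f_two (n : ℕ) (hn : 1 ≤ n) :
    ¬ BiHole n ((n + 1) / 2) (cycleGraph n) ∧
      IsGreatest {k | ∀ G : Fin n → Fin n → Prop,
        (∀ a, degA G a ≤ 2) → BiHole n k G} ((n + 1) / 2 - 1) := by
  have hnb : ¬ BiHole n ((n + 1) / 2) (cycleGraph n) := no_bihole_cycle n hn
  refine ⟨hnb, ?_, ?_⟩
  · intro G hdeg
    exact bihole_of_deg2 n hn G hdeg
  · intro k' hk'
    by_contra hcon
    push_neg at hcon
    have hle : (n + 1) / 2 ≤ k' := by omega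
    have hb := hk' (cycleGraph n) (degA_cycle n hn)
    exact hnb (bihole_mono _ hle hb)
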